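/- arXiv:1103.6206 — 3 statements merged into one kernel-verified Lean document; each statement's English description precedes it below -/
import Mathlib

section
/- With the bottom row of a 3-wide grid colored (a, b, c₀) with a, b, c₀ pairwise distinct (state 123), the number of ways to color the next row with three pairwise distinct colors (i₁, i₂, i₃) from {1,...,c} satisfying i₁ ≠ a, i₂ ≠ b, i₃ ≠ c₀ equals c³ - 6c² + 14c - 13. -/
open Finset

private lemma sum_off2' {n : ℕ} (f : Fin n → ℕ) (x y : Fin n) (hxy : x ≠ y) (v : ℕ)
    (hf : ∀ w, w ≠ x → w ≠ y → f w = v) :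
    ∑ w : Fin n, f w = f x + f y + (n - 2) * v := by
  classical
  rw [← Finset.sum_sdiff (Finset.subset_univ ({x, y} : Finset (Fin n)))]
  have h1 : ∑ w ∈ (univ \ {x, y}), f w = (n - 2) * v := by
    rw [Finset.sum_congr rfl (fun w hw => by
      simp only [Finset.mem_sdiff, Finset.mem_insert, Finset.mem_singleton] at hw
      exact hf w (by tauto) (by tauto)), Finset.sum_const, smul_eq_mul,
      Finset.card_sdiff_of_subset (Finset.subset_univ _), Finset.card_univ, Fintype.card_fin,
      Finset.card_insert_of_notMem (by simp [hxy]), Finset.card_singleton]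
  have h2 : ∑ w ∈ ({x, y} : Finset (Fin n)), f w = f x + f y := by
    rw [Finset.sum_insert (by simp [hxy]), Finset.sum_singleton]
  rw [h1, h2]; ring

private lemma sum_off3' {n : ℕ} (f : Fin n → ℕ) (x y z : Fin n)
    (hxy : x ≠ y) (hxz : x ≠ z) (hyz : y ≠ z) (v : ℕ)
    (hf : ∀ w, w ≠ x → w ≠ y → w ≠ z → f w = v) :
    ∑ w : Fin n, f w = f x + f y + f z + (n - 3) * v := by
  classical
  rw [← Finset.sum_sdiff (Finset.subset_univ ({x, y, z} : Finset (Fin n)))]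
  have h1 : ∑ w ∈ (univ \ {x, y, z}), f w = (n - 3) * v := by
    rw [Finset.sum_congr rfl (fun w hw => by
      simp only [Finset.mem_sdiff, Finset.mem_insert, Finset.mem_singleton] at hw
      exact hf w (by tauto) (by tauto) (by tauto)), Finset.sum_const, smul_eq_mul,
      Finset.card_sdiff_of_subset (Finset.subset_univ _), Finset.card_univ, Fintype.card_fin,
      Finset.card_insert_of_notMem (by simp [hxy, hxz]),
      Finset.card_insert_of_notMem (by simp [hyz]), Finset.card_singleton]
  have h2 : ∑ w ∈ ({x, y, z} : Finset (Fin n)), f w = f x + f y + f z := by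
    rw [Finset.sum_insert (by simp [hxy, hxz]), Finset.sum_insert (by simp [hyz]),
      Finset.sum_singleton, add_assoc]
  rw [h1, h2]; ring

private lemma count_notMem' (c : ℕ) (s : Finset (Fin c)) :
    ∑ i : Fin c, (if i ∉ s then (1:ℕ) else 0) = c - s.card := by
  classical
  have h : ∑ i : Fin c, (if i ∉ s then (1:ℕ) else 0) = (univ.filter (fun i => i ∉ s)).card := by
    rw [Finset.card_filter]
  rw [h, Finset.filter_not, Finset.filter_mem_eq_inter, Finset.univ_inter,
    Finset.card_sdiff_of_subset (Finset.subset_univ _), Finset.card_univ, Fintype.card_fin]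

set_option maxHeartbeats 2000000 in
/-- Transfer-matrix entry `M[123,123]`: with bottom row `(a,b,c₀)` pairwise
distinct, the number of next rows `(i₁,i₂,i₃)` pairwise distinct with
`i₁ ≠ a`, `i₂ ≠ b`, `i₃ ≠ c₀` equals `c³ - 6c² + 14c - 13`. -/
theorem transfer_123_123 (c : ℕ) (a b c₀ : Fin c)
    (hab : a ≠ b) (hac : a ≠ c₀) (hbc : b ≠ c₀) :
    (Fintype.card {t : Fin c × Fin c × Fin c //
        t.1 ≠ t.2.1 ∧ t.1 ≠ t.2.2 ∧ t.2.1 ≠ t.2.2 ∧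
        t.1 ≠ a ∧ t.2.1 ≠ b ∧ t.2.2 ≠ c₀} : ℤ) =
      (c : ℤ) ^ 3 - 6 * (c : ℤ) ^ 2 + 14 * (c : ℤ) - 13 := by
  classical
  -- c ≥ 3
  have hc3 : 3 ≤ c := by
    have hcard : ({a, b, c₀} : Finset (Fin c)).card = 3 := by
      rw [Finset.card_insert_of_notMem (by simp [hab, hac]),
        Finset.card_insert_of_notMem (by simp [hbc]), Finset.card_singleton]
    calc 3 = ({a, b, c₀} : Finset (Fin c)).card := hcard.symm
      _ ≤ (univ : Finset (Fin c)).card := Finset.card_le_univ _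
      _ = c := by rw [Finset.card_univ, Fintype.card_fin]
  obtain ⟨m, rfl⟩ : ∃ m, c = m + 3 := ⟨c - 3, by omega⟩
  -- step 1: card as double sum
  have step1 : Fintype.card {t : Fin (m+3) × Fin (m+3) × Fin (m+3) //
        t.1 ≠ t.2.1 ∧ t.1 ≠ t.2.2 ∧ t.2.1 ≠ t.2.2 ∧
        t.1 ≠ a ∧ t.2.1 ≠ b ∧ t.2.2 ≠ c₀} =
      ∑ i1 : Fin (m+3), ∑ i2 : Fin (m+3),
        if i1 ≠ i2 ∧ i1 ≠ a ∧ i2 ≠ b then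
          (m+3) - ({i1, i2, c₀} : Finset (Fin (m+3))).card else 0 := by
    rw [Fintype.card_subtype, Finset.card_filter, Fintype.sum_prod_type]
    simp only [Fintype.sum_prod_type]
    refine Finset.sum_congr rfl fun i1 _ => Finset.sum_congr rfl fun i2 _ => ?_
    by_cases hP : i1 ≠ i2 ∧ i1 ≠ a ∧ i2 ≠ b
    · rw [if_pos hP, ← count_notMem']
      refine Finset.sum_congr rfl fun i3 _ => ?_
      refine if_congr ?_ rfl rfl
      simp only [Finset.mem_insert, Finset.mem_singleton, not_or]
      constructor
      · rintro ⟨_, h13, h23, _, _, h3c⟩; exact ⟨Ne.symm h13, Ne.symm h23, h3c⟩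
      · rintro ⟨h1, h2, h3⟩; exact ⟨hP.1, Ne.symm h1, Ne.symm h2, hP.2.1, hP.2.2, h3⟩
    · rw [if_neg hP]
      exact Finset.sum_eq_zero fun i3 _ => if_neg (by tauto)
  -- step 2: rewrite summand into explicit case function
  have key : ∀ i1 i2 : Fin (m+3),
      (if i1 ≠ i2 ∧ i1 ≠ a ∧ i2 ≠ b then
          (m+3) - ({i1, i2, c₀} : Finset (Fin (m+3))).card else 0) =
      (if i1 = a ∨ i2 = b ∨ i1 = i2 then 0
        else if i1 = c₀ ∨ i2 = c₀ then m + 1 else m) := by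
    intro i1 i2
    by_cases h1 : i1 = a ∨ i2 = b ∨ i1 = i2
    · rw [if_neg (by tauto), if_pos h1]
    · push_neg at h1
      obtain ⟨h1a, h2b, h12⟩ := h1
      rw [if_pos ⟨h12, h1a, h2b⟩, if_neg (by tauto)]
      by_cases h1c : i1 = c₀
      · subst h1c
        have hs : ({i1, i2, i1} : Finset (Fin (m+3))) = {i1, i2} := by
          ext w; simp; tauto
        rw [if_pos (Or.inl rfl), hs,
          Finset.card_insert_of_notMem (by simp [h12]), Finset.card_singleton]
        omega
      · by_cases h2c : i2 = c₀
        · subst h2c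
          have hs : ({i1, i2, i2} : Finset (Fin (m+3))) = {i1, i2} := by
            ext w; simp
          rw [if_pos (Or.inr rfl), hs,
            Finset.card_insert_of_notMem (by simp [h12]), Finset.card_singleton]
          omega
        · rw [if_neg (by tauto),
            Finset.card_insert_of_notMem (by simp [h12, h1c]),
            Finset.card_insert_of_notMem (by simp [h2c]), Finset.card_singleton]
          omega
  -- shorthand for the case function
  set F : Fin (m+3) → Fin (m+3) → ℕ := fun i1 i2 =>
    if i1 = a ∨ i2 = b ∨ i1 = i2 then 0
    else if i1 = c₀ ∨ i2 = c₀ then m + 1 else m with hF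
  -- inner sums
  have fa : ∑ i2 : Fin (m+3), F a i2 = 0 :=
    Finset.sum_eq_zero fun i2 _ => by simp [hF]
  have fb : ∑ i2 : Fin (m+3), F b i2 = (m+1) + (m+1) * m := by
    rw [sum_off2' (F b) b c₀ hbc m
      (fun w hwb hwc => by simp [hF, hab.symm, Ne.symm hwb, hwb, hbc, hwc])]
    have h1 : F b b = 0 := by simp [hF]
    have h2 : F b c₀ = m + 1 := by simp [hF, hab.symm, hbc.symm, hbc]
    rw [h1, h2]
    have : m + 3 - 2 = m + 1 := by omega
    rw [this]; ring
  have fc : ∑ i2 : Fin (m+3), F c₀ i2 = (m+1) * (m+1) := by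
    rw [sum_off2' (F c₀) b c₀ hbc (m+1)
      (fun w hwb hwc => by simp [hF, hac.symm, hwb, Ne.symm hwc, hwc])]
    have h1 : F c₀ b = 0 := by simp [hF]
    have h2 : F c₀ c₀ = 0 := by simp [hF]
    rw [h1, h2]
    have : m + 3 - 2 = m + 1 := by omega
    rw [this]; ring
  have fgen : ∀ i1 : Fin (m+3), i1 ≠ a → i1 ≠ b → i1 ≠ c₀ →
      ∑ i2 : Fin (m+3), F i1 i2 = (m + 1) + m * m := by
    intro i1 h1a h1b h1c
    rw [sum_off3' (F i1) b i1 c₀ (Ne.symm h1b) hbc h1c m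
      (fun w hwb hw1 hwc => by simp [hF, h1a, hwb, Ne.symm hw1, h1c, hwc])]
    have h1 : F i1 b = 0 := by simp [hF]
    have h2 : F i1 i1 = 0 := by simp [hF]
    have h3 : F i1 c₀ = m + 1 := by simp [hF, h1a, hbc.symm, h1b, h1c]
    rw [h1, h2, h3]
    have : m + 3 - 3 = m := by omega
    rw [this]; ring
  -- outer sum
  have hN : Fintype.card {t : Fin (m+3) × Fin (m+3) × Fin (m+3) //
        t.1 ≠ t.2.1 ∧ t.1 ≠ t.2.2 ∧ t.2.1 ≠ t.2.2 ∧
        t.1 ≠ a ∧ t.2.1 ≠ b ∧ t.2.2 ≠ c₀} = m^3 + 3*m^2 + 5*m + 2 := by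
    rw [step1]
    simp only [key]
    rw [sum_off3' (fun i1 => ∑ i2 : Fin (m+3), F i1 i2) a b c₀ hab hac hbc
      ((m+1) + m*m) (fun w hwa hwb hwc => fgen w hwa hwb hwc)]
    rw [fa, fb, fc]
    have : m + 3 - 3 = m := by omega
    rw [this]; ring
  rw [hN]; push_cast; ring
end

section
/- The number of proper c-colorings of the 3×n grid graph P_3 × P_n satisfies, for n ≥ 1, the vector recurrence a(n+1) = (c²-3c+3)·a(n) + (c²-4c+5)·b(n) and b(n+1) = (c³-6c²+13c-10)·a(n) + (c³-6c²+14c-13)·b(n), where a(n) is the number of proper colorings whose top row has pattern (x,y,x) and b(n) the number whose top row has three distinct colors; the total number of proper colorings is a(n)+b(n), with a(1) = c(c-1) and b(1) = c(c-1)(c-2). -/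
/-- Adjacency in the `r × n` grid: lattice points differing by 1 in exactly
one coordinate. -/
def GridAdj {r n : ℕ} (p q : Fin r × Fin n) : Prop :=
  (p.1 = q.1 ∧ ((p.2 : ℕ) + 1 = q.2 ∨ (q.2 : ℕ) + 1 = p.2)) ∨
  (p.2 = q.2 ∧ ((p.1 : ℕ) + 1 = q.1 ∨ (q.1 : ℕ) + 1 = p.1))

instance {r n : ℕ} (p q : Fin r × Fin n) : Decidable (GridAdj p q) := by
  unfold GridAdj; infer_instance

/-- Number of proper `c`-colorings of the `r × n` grid graph. -/
def gridColorings (r n c : ℕ) : ℕ :=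
  Fintype.card {f : Fin r × Fin n → Fin c //
    ∀ p q, GridAdj p q → f p ≠ f q}

/-- `a(n+1)`: proper colorings of the 3×(n+1) grid whose top row (last column)
has pattern `(x,y,x)`. -/
def aCount (n c : ℕ) : ℕ :=
  Fintype.card {f : Fin 3 × Fin (n + 1) → Fin c //
    (∀ p q, GridAdj p q → f p ≠ f q) ∧ f (0, Fin.last n) = f (2, Fin.last n)}

/-- `b(n+1)`: proper colorings of the 3×(n+1) grid whose top row uses three
pairwise distinct colors. -/
def bCount (n c : ℕ) : ℕ :=
  Fintype.card {f : Fin 3 × Fin (n + 1) → Fin c //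
    (∀ p q, GridAdj p q → f p ≠ f q) ∧ f (0, Fin.last n) ≠ f (2, Fin.last n)}

def Proper3 {m c : ℕ} (f : Fin 3 × Fin m → Fin c) : Prop := ∀ p q, GridAdj p q → f p ≠ f q

instance {m c : ℕ} (f : Fin 3 × Fin m → Fin c) : Decidable (Proper3 f) := by
  unfold Proper3; infer_instance

def trunc3 {n c : ℕ} (f : Fin 3 × Fin (n + 2) → Fin c) : Fin 3 × Fin (n + 1) → Fin c :=
  fun p => f (p.1, p.2.castSucc)

def ext3 {n c : ℕ} (g : Fin 3 × Fin (n + 1) → Fin c) (v : Fin 3 → Fin c) :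
    Fin 3 × Fin (n + 2) → Fin c :=
  fun p => if h : (p.2 : ℕ) < n + 1 then g (p.1, ⟨p.2, h⟩) else v p.1

lemma col_adj {c : ℕ} (v : Fin 3 → Fin c) (h01 : v 0 ≠ v 1) (h12 : v 1 ≠ v 2)
    (i j : Fin 3) (hij : (i : ℕ) + 1 = j ∨ (j : ℕ) + 1 = i) : v i ≠ v j := by
  fin_cases i <;> fin_cases j <;>
    first
      | exact h01 | exact h01.symm | exact h12 | exact h12.symm
      | (exfalso; revert hij; decide)

lemma vert_adj {m : ℕ} (i j : Fin 3) (t : Fin m) (hij : (i : ℕ) + 1 = j ∨ (j : ℕ) + 1 = i) :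
    GridAdj (i, t) (j, t) := Or.inr ⟨rfl, hij⟩

lemma adj01 {m : ℕ} (t : Fin m) : GridAdj ((0 : Fin 3), t) ((1 : Fin 3), t) :=
  vert_adj 0 1 t (by decide)

lemma adj12 {m : ℕ} (t : Fin m) : GridAdj ((1 : Fin 3), t) ((2 : Fin 3), t) :=
  vert_adj 1 2 t (by decide)

lemma trunc3_proper {n c : ℕ} (f : Fin 3 × Fin (n + 2) → Fin c) (hf : Proper3 f) :
    Proper3 (trunc3 f) := by
  intro p q hadj
  apply hf
  rcases hadj with ⟨hrow, hcol⟩ | ⟨hcol, hrow⟩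
  · exact Or.inl ⟨hrow, by simpa using hcol⟩
  · exact Or.inr ⟨by simpa [Fin.ext_iff] using hcol, hrow⟩

lemma ext3_proper {n c : ℕ} (g : Fin 3 × Fin (n + 1) → Fin c) (hg : Proper3 g)
    (v : Fin 3 → Fin c) (h01 : v 0 ≠ v 1) (h12 : v 1 ≠ v 2)
    (hcompat : ∀ i, v i ≠ g (i, Fin.last n)) : Proper3 (ext3 g v) := by
  have hlast : ∀ (i : Fin 3) (t : Fin (n + 2)) (h : (t : ℕ) < n + 1), (t : ℕ) = n →
      g (i, ⟨t, h⟩) ≠ v i := by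
    intro i t h ht
    have : (⟨(t : ℕ), h⟩ : Fin (n + 1)) = Fin.last n := by
      simp [Fin.ext_iff, ht]
    rw [this]
    exact (hcompat i).symm
  intro p q hadj
  rcases hadj with ⟨hrow, hcol⟩ | ⟨hcol, hrow⟩
  · -- horizontal
    unfold ext3
    rcases hcol with h | h
    · have hp : (p.2 : ℕ) < n + 1 := by omega
      rw [dif_pos hp]
      by_cases hq : (q.2 : ℕ) < n + 1
      · rw [dif_pos hq]
        exact hg _ _ (Or.inl ⟨hrow, Or.inl (by simpa using h)⟩)
      · rw [dif_neg hq, ← hrow]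
        exact hlast p.1 p.2 hp (by omega)
    · have hq : (q.2 : ℕ) < n + 1 := by omega
      rw [dif_pos hq]
      by_cases hp : (p.2 : ℕ) < n + 1
      · rw [dif_pos hp]
        exact hg _ _ (Or.inl ⟨hrow, Or.inr (by simpa using h)⟩)
      · rw [dif_neg hp, hrow]
        exact (hlast q.1 q.2 hq (by omega)).symm
  · -- vertical
    unfold ext3
    by_cases hp : (p.2 : ℕ) < n + 1
    · have hq : (q.2 : ℕ) < n + 1 := by rw [← hcol]; exact hp
      rw [dif_pos hp, dif_pos hq]
      refine hg _ _ (Or.inr ⟨?_, hrow⟩)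
      simp [Fin.ext_iff, hcol]
    · have hq : ¬ (q.2 : ℕ) < n + 1 := by rw [← hcol]; exact hp
      rw [dif_neg hp, dif_neg hq]
      exact col_adj v h01 h12 p.1 q.1 hrow

lemma trunc3_ext3 {n c : ℕ} (g : Fin 3 × Fin (n + 1) → Fin c) (v : Fin 3 → Fin c) :
    trunc3 (ext3 g v) = g := by
  funext p
  obtain ⟨i, t⟩ := p
  unfold trunc3 ext3
  rw [dif_pos (by simpa using t.isLt)]
  exact congrArg (fun s => g (i, s)) (Fin.ext (by simp))

lemma ext3_last {n c : ℕ} (g : Fin 3 × Fin (n + 1) → Fin c) (v : Fin 3 → Fin c) :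
    (fun i => ext3 g v (i, Fin.last (n + 1))) = v := by
  funext i
  unfold ext3
  rw [dif_neg (by simp)]

lemma ext3_trunc3 {n c : ℕ} (f : Fin 3 × Fin (n + 2) → Fin c) :
    ext3 (trunc3 f) (fun i => f (i, Fin.last (n + 1))) = f := by
  funext p
  obtain ⟨i, t⟩ := p
  unfold ext3 trunc3
  by_cases h : (t : ℕ) < n + 1
  · rw [dif_pos h]
    have he : Fin.castSucc (⟨(t : ℕ), h⟩ : Fin (n + 1)) = t := by simp [Fin.ext_iff]
    exact congrArg (fun s => f (i, s)) he
  · rw [dif_neg h]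
    have he : Fin.last (n + 1) = t := by
      have := t.isLt
      simp only [Fin.ext_iff, Fin.val_last]
      omega
    exact congrArg (fun s => f (i, s)) he

lemma step_count (n c : ℕ) (T : (Fin 3 → Fin c) → Prop) [DecidablePred T] :
    Fintype.card {f : Fin 3 × Fin (n + 2) → Fin c //
        Proper3 f ∧ T (fun i => f (i, Fin.last (n + 1)))} =
      ∑ g ∈ Finset.univ.filter (fun g : Fin 3 × Fin (n + 1) → Fin c => Proper3 g),
        Fintype.card {v : Fin 3 → Fin c //
          (v 0 ≠ v 1 ∧ v 1 ≠ v 2) ∧ (∀ i, v i ≠ g (i, Fin.last n)) ∧ T v} := by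
  rw [Fintype.card_subtype]
  rw [Finset.card_eq_sum_card_fiberwise (f := trunc3)
    (t := Finset.univ.filter (fun g => Proper3 g))
    (fun f hf => by
      simp only [Finset.mem_coe, Finset.mem_filter, Finset.mem_univ, true_and] at *
      exact trunc3_proper f hf.1)]
  refine Finset.sum_congr rfl fun g hg => ?_
  simp only [Finset.mem_filter, Finset.mem_univ, true_and] at hg
  rw [Fintype.card_subtype]
  refine (Finset.card_nbij' (fun f => fun i => f (i, Fin.last (n + 1))) (fun v => ext3 g v)
    ?_ ?_ ?_ ?_).symm.symm
  · intro f hf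
    simp only [Finset.mem_coe, Finset.mem_filter, Finset.mem_univ, true_and] at hf ⊢
    obtain ⟨⟨hp, hT⟩, htr⟩ := hf
    refine ⟨⟨hp _ _ (adj01 _), hp _ _ (adj12 _)⟩, ?_, hT⟩
    intro i
    rw [← htr]
    unfold trunc3
    exact (hp ((i, Fin.last n).1, (i, Fin.last n).2.castSucc) (i, Fin.last (n + 1))
      (Or.inl ⟨rfl, Or.inl (by simp)⟩)).symm
  · intro v hv
    simp only [Finset.mem_coe, Finset.mem_filter, Finset.mem_univ, true_and] at hv ⊢
    obtain ⟨⟨h01, h12⟩, hcompat, hT⟩ := hv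
    refine ⟨⟨ext3_proper g hg v h01 h12 hcompat, ?_⟩, trunc3_ext3 g v⟩
    rw [ext3_last]
    exact hT
  · intro f hf
    simp only [Finset.mem_coe, Finset.mem_filter, Finset.mem_univ, true_and] at hf
    rw [← hf.2]
    exact ext3_trunc3 f
  · intro v _
    exact ext3_last g v

lemma card_prod_split {α β : Type*} [Fintype α] [Fintype β] (P : α → Prop) (Q : α → β → Prop)
    [DecidablePred P] [∀ a, DecidablePred (Q a)] :
    Fintype.card {p : α × β // P p.1 ∧ Q p.1 p.2} =
      ∑ a ∈ Finset.univ.filter P, Fintype.card {b // Q a b} := by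
  rw [Finset.sum_subtype (p := P) (Finset.univ.filter P) (fun x => by simp)
    (fun a => Fintype.card {b // Q a b})]
  rw [← Fintype.card_sigma]
  exact Fintype.card_congr
    { toFun := fun p => ⟨⟨p.1.1, p.2.1⟩, ⟨p.1.2, p.2.2⟩⟩
      invFun := fun s => ⟨(s.1.1, s.2.1), s.1.2, s.2.2⟩
      left_inv := fun p => rfl
      right_inv := fun s => rfl }

section CC
open Finset
variable {c : ℕ}

lemma inner2 (y a : Fin c) :
    (Fintype.card {b : Fin c // b ≠ y ∧ b ≠ a} : ℤ) = c - ({y, a} : Finset (Fin c)).card := by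
  rw [Fintype.card_subtype]
  have h1 : Finset.univ.filter (fun b : Fin c => b ≠ y ∧ b ≠ a) = Finset.univ \ {y, a} := by
    ext b; simp [and_comm]
  rw [h1, Finset.card_sdiff_of_subset (Finset.subset_univ _)]
  have := Finset.card_le_univ ({y, a} : Finset (Fin c))
  simp only [Finset.card_univ, Fintype.card_fin] at this ⊢
  omega

lemma inner3 (y a a' : Fin c) :
    (Fintype.card {b : Fin c // b ≠ y ∧ b ≠ a ∧ b ≠ a'} : ℤ) =
      c - ({y, a, a'} : Finset (Fin c)).card := by
  rw [Fintype.card_subtype]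
  have h1 : Finset.univ.filter (fun b : Fin c => b ≠ y ∧ b ≠ a ∧ b ≠ a') =
      Finset.univ \ {y, a, a'} := by
    ext b; simp only [Finset.mem_filter, Finset.mem_univ, true_and, Finset.mem_sdiff,
      Finset.mem_insert, Finset.mem_singleton]; tauto
  rw [h1, Finset.card_sdiff_of_subset (Finset.subset_univ _)]
  have := Finset.card_le_univ ({y, a, a'} : Finset (Fin c))
  simp only [Finset.card_univ, Fintype.card_fin] at this ⊢
  omega

lemma pair2 (y a : Fin c) : (({y, a} : Finset (Fin c)).card : ℤ) = 2 - (if a = y then 1 else 0) := by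
  by_cases h : a = y
  · simp [h]
  · rw [Finset.card_insert_of_notMem (by simp [Ne.symm h]), Finset.card_singleton]; simp [h]

lemma LA_A (x y : Fin c) (hxy : x ≠ y) :
    (Fintype.card {p : Fin c × Fin c // p.1 ≠ x ∧ (p.2 ≠ y ∧ p.2 ≠ p.1)} : ℤ) =
      c ^ 2 - 3 * c + 3 := by
  rw [card_prod_split (fun a => a ≠ x) (fun a b => b ≠ y ∧ b ≠ a)]
  push_cast
  rw [Finset.sum_congr rfl (fun a _ => inner2 y a)]
  have hcard : (Finset.univ.filter (fun a : Fin c => a ≠ x)).card = c - 1 := by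
    rw [Finset.filter_ne', Finset.card_erase_of_mem (Finset.mem_univ x)]
    simp
  have hc : 1 ≤ c := Fin.pos x
  calc ∑ a ∈ Finset.univ.filter (fun a : Fin c => a ≠ x),
        ((c : ℤ) - ({y, a} : Finset (Fin c)).card)
      = ∑ a ∈ Finset.univ.filter (fun a : Fin c => a ≠ x),
        ((c : ℤ) - 2 + (if a = y then 1 else 0)) := by
        refine Finset.sum_congr rfl fun a _ => ?_
        rw [pair2]; ring
    _ = ((c : ℤ) - 2) * (c - 1) + 1 := by
        rw [Finset.sum_add_distrib, Finset.sum_const, hcard, Finset.sum_ite_eq' _ y]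
        simp [hxy.symm]
        push_cast [hc]
        ring
    _ = c ^ 2 - 3 * c + 3 := by ring

lemma two_le (x z : Fin c) (h : x ≠ z) : 2 ≤ c := by
  by_contra hc; push_neg at hc
  interval_cases c
  · exact x.elim0
  · exact h (Subsingleton.elim x z)

lemma cardD (w w' : Fin c) (h : w ≠ w') :
    (Finset.univ.filter fun b : Fin c => b ≠ w ∧ b ≠ w').card = c - 2 := by
  have h1 : Finset.univ.filter (fun b : Fin c => b ≠ w ∧ b ≠ w') = Finset.univ \ {w, w'} := by
    ext b; simp [and_comm]
  rw [h1, Finset.card_sdiff_of_subset (Finset.subset_univ _),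
    Finset.card_insert_of_notMem (by simpa using h), Finset.card_singleton]
  simp

lemma LB_A (x y z : Fin c) (hxy : x ≠ y) (hyz : y ≠ z) (hxz : x ≠ z) :
    (Fintype.card {p : Fin c × Fin c // (p.1 ≠ x ∧ p.1 ≠ z) ∧ (p.2 ≠ y ∧ p.2 ≠ p.1)} : ℤ) =
      c ^ 2 - 4 * c + 5 := by
  rw [card_prod_split (fun a => a ≠ x ∧ a ≠ z) (fun a b => b ≠ y ∧ b ≠ a)]
  push_cast
  rw [Finset.sum_congr rfl (fun a _ => inner2 y a)]
  have hcard : (Finset.univ.filter (fun a : Fin c => a ≠ x ∧ a ≠ z)).card = c - 2 := cardD x z hxz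
  have hc : 2 ≤ c := two_le x z hxz
  calc ∑ a ∈ Finset.univ.filter (fun a : Fin c => a ≠ x ∧ a ≠ z),
        ((c : ℤ) - ({y, a} : Finset (Fin c)).card)
      = ∑ a ∈ Finset.univ.filter (fun a : Fin c => a ≠ x ∧ a ≠ z),
        ((c : ℤ) - 2 + (if a = y then 1 else 0)) := by
        refine Finset.sum_congr rfl fun a _ => ?_
        rw [pair2]; ring
    _ = ((c : ℤ) - 2) * (c - 2) + 1 := by
        rw [Finset.sum_add_distrib, Finset.sum_const, hcard, Finset.sum_ite_eq' _ y,
          if_pos (by simp [Ne.symm hxy, hyz] : y ∈ _), nsmul_eq_mul, Nat.cast_sub hc]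
        push_cast
        ring
    _ = c ^ 2 - 4 * c + 5 := by ring

lemma triple_card (w u v : Fin c) (huv : u ≠ v) :
    (({w, u, v} : Finset (Fin c)).card : ℤ) =
      3 - (if u = w then 1 else 0) - (if v = w then 1 else 0) := by
  by_cases h1 : u = w <;> by_cases h2 : v = w
  · exact absurd (h1.trans h2.symm) huv
  · subst h1
    have he : ({u, u, v} : Finset (Fin c)) = {u, v} := by ext b; simp
    rw [he, Finset.card_insert_of_notMem (by simpa using Ne.symm h2), Finset.card_singleton]
    simp [h2]
  · subst h2
    have he : ({v, u, v} : Finset (Fin c)) = {v, u} := by ext b; simp; tauto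
    rw [he, Finset.card_insert_of_notMem (by simpa using Ne.symm huv), Finset.card_singleton]
    simp [h1]
  · rw [Finset.card_insert_of_notMem (by simp [Ne.symm h1, Ne.symm h2]),
      Finset.card_insert_of_notMem (by simpa using huv), Finset.card_singleton]
    simp [h1, h2]

lemma card_ne (w : Fin c) : (Finset.univ.filter fun b : Fin c => b ≠ w).card = c - 1 := by
  rw [Finset.filter_ne', Finset.card_erase_of_mem (Finset.mem_univ w)]
  simp

lemma LA_B (x y : Fin c) (hxy : x ≠ y) :
    (Fintype.card {p : (Fin c × Fin c) × Fin c //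
        (p.1.1 ≠ x ∧ (p.1.2 ≠ y ∧ p.1.2 ≠ p.1.1)) ∧
        (p.2 ≠ x ∧ p.2 ≠ p.1.2 ∧ p.2 ≠ p.1.1)} : ℤ) =
      c ^ 3 - 6 * c ^ 2 + 13 * c - 10 := by
  rw [card_prod_split (fun a : Fin c × Fin c => a.1 ≠ x ∧ (a.2 ≠ y ∧ a.2 ≠ a.1))
    (fun a b => b ≠ x ∧ b ≠ a.2 ∧ b ≠ a.1)]
  push_cast
  rw [Finset.sum_congr rfl (fun a _ => inner3 x a.2 a.1)]
  set s := Finset.univ.filter (fun a : Fin c × Fin c => a.1 ≠ x ∧ (a.2 ≠ y ∧ a.2 ≠ a.1)) with hs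
  have hscard : (s.card : ℤ) = c ^ 2 - 3 * c + 3 := by
    rw [hs, ← Fintype.card_subtype]; exact LA_A x y hxy
  have hterm : ∀ a ∈ s, ((c : ℤ) - ({x, a.2, a.1} : Finset (Fin c)).card) =
      ((c : ℤ) - 3) + (if a.2 = x then 1 else 0) := by
    intro a ha
    rw [hs, Finset.mem_filter] at ha
    rw [triple_card x a.2 a.1 ha.2.2.2]
    rw [if_neg ha.2.1]
    ring
  rw [Finset.sum_congr rfl hterm, Finset.sum_add_distrib, Finset.sum_const,
    nsmul_eq_mul, hscard, Finset.sum_boole]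
  have hK : (s.filter fun a => a.2 = x).card = c - 1 := by
    have he : (s.filter fun a => a.2 = x) =
        Finset.univ.filter (fun a : Fin c × Fin c => a.1 ≠ x ∧ a.2 = x) := by
      rw [hs]; ext ⟨a1, a2⟩
      simp only [Finset.mem_filter, Finset.mem_univ, true_and]
      constructor
      · rintro ⟨⟨h1, _, _⟩, h4⟩; exact ⟨h1, h4⟩
      · rintro ⟨h1, h4⟩; subst h4; exact ⟨⟨h1, hxy, Ne.symm h1⟩, rfl⟩
    rw [he]
    have hb2 : (Finset.univ.filter (fun a : Fin c × Fin c => a.1 ≠ x ∧ a.2 = x)).card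
        = (Finset.univ.filter fun b : Fin c => b ≠ x).card :=
      Finset.card_nbij' (fun a => a.1) (fun b => (b, x))
        (fun a ha => by obtain ⟨a1, a2⟩ := a; simp_all) (fun b hb => by simp_all)
        (fun a ha => by obtain ⟨a1, a2⟩ := a; simp_all) (fun b hb => rfl)
    rw [hb2, card_ne x]
  rw [hK]
  have hc : 1 ≤ c := Fin.pos x
  rw [Nat.cast_sub hc]
  push_cast
  ring

lemma LB_B (x y z : Fin c) (hxy : x ≠ y) (hyz : y ≠ z) (hxz : x ≠ z) :
    (Fintype.card {p : (Fin c × Fin c) × Fin c //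
        (p.1.1 ≠ x ∧ (p.1.2 ≠ y ∧ p.1.2 ≠ p.1.1)) ∧
        (p.2 ≠ z ∧ p.2 ≠ p.1.2 ∧ p.2 ≠ p.1.1)} : ℤ) =
      c ^ 3 - 6 * c ^ 2 + 14 * c - 13 := by
  rw [card_prod_split (fun a : Fin c × Fin c => a.1 ≠ x ∧ (a.2 ≠ y ∧ a.2 ≠ a.1))
    (fun a b => b ≠ z ∧ b ≠ a.2 ∧ b ≠ a.1)]
  push_cast
  rw [Finset.sum_congr rfl (fun a _ => inner3 z a.2 a.1)]
  set s := Finset.univ.filter (fun a : Fin c × Fin c => a.1 ≠ x ∧ (a.2 ≠ y ∧ a.2 ≠ a.1)) with hs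
  have hscard : (s.card : ℤ) = c ^ 2 - 3 * c + 3 := by
    rw [hs, ← Fintype.card_subtype]; exact LA_A x y hxy
  have hterm : ∀ a ∈ s, ((c : ℤ) - ({z, a.2, a.1} : Finset (Fin c)).card) =
      ((c : ℤ) - 3) + (if a.2 = z then 1 else 0) + (if a.1 = z then 1 else 0) := by
    intro a ha
    rw [triple_card z a.2 a.1 (by rw [hs, Finset.mem_filter] at ha; exact ha.2.2.2)]
    ring
  rw [Finset.sum_congr rfl hterm, Finset.sum_add_distrib, Finset.sum_add_distrib,
    Finset.sum_const, nsmul_eq_mul, hscard, Finset.sum_boole, Finset.sum_boole]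
  have hK2 : (s.filter fun a => a.2 = z).card = c - 2 := by
    have he : (s.filter fun a => a.2 = z) =
        Finset.univ.filter (fun a : Fin c × Fin c => (a.1 ≠ x ∧ a.1 ≠ z) ∧ a.2 = z) := by
      rw [hs]; ext ⟨a1, a2⟩
      simp only [Finset.mem_filter, Finset.mem_univ, true_and]
      constructor
      · rintro ⟨⟨h1, _, h3⟩, h4⟩; subst h4; exact ⟨⟨h1, Ne.symm h3⟩, rfl⟩
      · rintro ⟨⟨h1, h2⟩, h4⟩; subst h4; exact ⟨⟨h1, Ne.symm hyz, Ne.symm h2⟩, rfl⟩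
    rw [he]
    have hb2 : (Finset.univ.filter (fun a : Fin c × Fin c => (a.1 ≠ x ∧ a.1 ≠ z) ∧ a.2 = z)).card
        = (Finset.univ.filter fun b : Fin c => b ≠ x ∧ b ≠ z).card :=
      Finset.card_nbij' (fun a => a.1) (fun b => (b, z))
        (fun a ha => by obtain ⟨a1, a2⟩ := a; simp_all) (fun b hb => by simp_all)
        (fun a ha => by obtain ⟨a1, a2⟩ := a; simp_all) (fun b hb => rfl)
    rw [hb2, cardD x z hxz]
  have hK1 : (s.filter fun a => a.1 = z).card = c - 2 := by
    have he : (s.filter fun a => a.1 = z) =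
        Finset.univ.filter (fun a : Fin c × Fin c => (a.2 ≠ y ∧ a.2 ≠ z) ∧ a.1 = z) := by
      rw [hs]; ext ⟨a1, a2⟩
      simp only [Finset.mem_filter, Finset.mem_univ, true_and]
      constructor
      · rintro ⟨⟨_, h2, h3⟩, h4⟩; subst h4; exact ⟨⟨h2, h3⟩, rfl⟩
      · rintro ⟨⟨h2, h3⟩, h4⟩; subst h4; exact ⟨⟨Ne.symm hxz, h2, h3⟩, rfl⟩
    rw [he]
    have hb2 : (Finset.univ.filter (fun a : Fin c × Fin c => (a.2 ≠ y ∧ a.2 ≠ z) ∧ a.1 = z)).card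
        = (Finset.univ.filter fun b : Fin c => b ≠ y ∧ b ≠ z).card :=
      Finset.card_nbij' (fun a => a.2) (fun b => (z, b))
        (fun a ha => by obtain ⟨a1, a2⟩ := a; simp_all) (fun b hb => by simp_all)
        (fun a ha => by obtain ⟨a1, a2⟩ := a; simp_all) (fun b hb => rfl)
    rw [hb2, cardD y z hyz]
  rw [hK1, hK2]
  have hc : 2 ≤ c := two_le x z hxz
  rw [Nat.cast_sub hc]
  push_cast
  ring

end CC

section ColCounts
variable {c : ℕ}

lemma col_a_eq (u : Fin 3 → Fin c) (h01 : u 0 ≠ u 1) (h02 : u 0 = u 2) :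
    (Fintype.card {v : Fin 3 → Fin c //
      (v 0 ≠ v 1 ∧ v 1 ≠ v 2) ∧ (∀ i, v i ≠ u i) ∧ v 0 = v 2} : ℤ) =
      (c : ℤ) ^ 2 - 3 * c + 3 := by
  rw [Fintype.card_congr
    (show {v : Fin 3 → Fin c // (v 0 ≠ v 1 ∧ v 1 ≠ v 2) ∧ (∀ i, v i ≠ u i) ∧ v 0 = v 2} ≃
        {p : Fin c × Fin c // p.1 ≠ u 0 ∧ (p.2 ≠ u 1 ∧ p.2 ≠ p.1)} from
      { toFun := fun v => ⟨(v.1 0, v.1 1), v.2.2.1 0, v.2.2.1 1, Ne.symm v.2.1.1⟩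
        invFun := fun p => ⟨![p.1.1, p.1.2, p.1.1],
          ⟨⟨Ne.symm p.2.2.2, p.2.2.2⟩,
            fun i => by
              fin_cases i
              · exact p.2.1
              · exact p.2.2.1
              · exact h02 ▸ p.2.1,
            rfl⟩⟩
        left_inv := fun v => Subtype.ext (by
          funext i
          fin_cases i
          · rfl
          · rfl
          · exact v.2.2.2)
        right_inv := fun p => rfl })]
  exact LA_A (u 0) (u 1) h01

lemma col_a_ne (u : Fin 3 → Fin c) (h01 : u 0 ≠ u 1) (h12 : u 1 ≠ u 2) (h02 : u 0 ≠ u 2) :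
    (Fintype.card {v : Fin 3 → Fin c //
      (v 0 ≠ v 1 ∧ v 1 ≠ v 2) ∧ (∀ i, v i ≠ u i) ∧ v 0 = v 2} : ℤ) =
      (c : ℤ) ^ 2 - 4 * c + 5 := by
  rw [Fintype.card_congr
    (show {v : Fin 3 → Fin c // (v 0 ≠ v 1 ∧ v 1 ≠ v 2) ∧ (∀ i, v i ≠ u i) ∧ v 0 = v 2} ≃
        {p : Fin c × Fin c // (p.1 ≠ u 0 ∧ p.1 ≠ u 2) ∧ (p.2 ≠ u 1 ∧ p.2 ≠ p.1)} from
      { toFun := fun v => ⟨(v.1 0, v.1 1),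
          ⟨v.2.2.1 0, by rw [v.2.2.2]; exact v.2.2.1 2⟩, v.2.2.1 1, Ne.symm v.2.1.1⟩
        invFun := fun p => ⟨![p.1.1, p.1.2, p.1.1],
          ⟨⟨Ne.symm p.2.2.2, p.2.2.2⟩,
            fun i => by
              fin_cases i
              · exact p.2.1.1
              · exact p.2.2.1
              · exact p.2.1.2,
            rfl⟩⟩
        left_inv := fun v => Subtype.ext (by
          funext i
          fin_cases i
          · rfl
          · rfl
          · exact v.2.2.2)
        right_inv := fun p => rfl })]
  exact LB_A (u 0) (u 1) (u 2) h01 h12 h02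

lemma col_b_eq (u : Fin 3 → Fin c) (h01 : u 0 ≠ u 1) (h12 : u 1 ≠ u 2) (h02 : u 0 = u 2) :
    (Fintype.card {v : Fin 3 → Fin c //
      (v 0 ≠ v 1 ∧ v 1 ≠ v 2) ∧ (∀ i, v i ≠ u i) ∧ v 0 ≠ v 2} : ℤ) =
      (c : ℤ) ^ 3 - 6 * c ^ 2 + 13 * c - 10 := by
  rw [Fintype.card_congr
    (show {v : Fin 3 → Fin c // (v 0 ≠ v 1 ∧ v 1 ≠ v 2) ∧ (∀ i, v i ≠ u i) ∧ v 0 ≠ v 2} ≃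
        {p : (Fin c × Fin c) × Fin c //
          (p.1.1 ≠ u 0 ∧ (p.1.2 ≠ u 1 ∧ p.1.2 ≠ p.1.1)) ∧
          (p.2 ≠ u 0 ∧ p.2 ≠ p.1.2 ∧ p.2 ≠ p.1.1)} from
      { toFun := fun v => ⟨((v.1 0, v.1 1), v.1 2),
          ⟨v.2.2.1 0, v.2.2.1 1, Ne.symm v.2.1.1⟩,
          ⟨by rw [h02]; exact v.2.2.1 2, Ne.symm v.2.1.2, Ne.symm v.2.2.2⟩⟩
        invFun := fun p => ⟨![p.1.1.1, p.1.1.2, p.1.2],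
          ⟨⟨Ne.symm p.2.1.2.2, Ne.symm p.2.2.2.1⟩,
            fun i => by
              fin_cases i
              · exact p.2.1.1
              · exact p.2.1.2.1
              · exact h02 ▸ p.2.2.1,
            Ne.symm p.2.2.2.2⟩⟩
        left_inv := fun v => Subtype.ext (by funext i; fin_cases i <;> rfl)
        right_inv := fun p => rfl })]
  exact LA_B (u 0) (u 1) h01

lemma col_b_ne (u : Fin 3 → Fin c) (h01 : u 0 ≠ u 1) (h12 : u 1 ≠ u 2) (h02 : u 0 ≠ u 2) :
    (Fintype.card {v : Fin 3 → Fin c //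
      (v 0 ≠ v 1 ∧ v 1 ≠ v 2) ∧ (∀ i, v i ≠ u i) ∧ v 0 ≠ v 2} : ℤ) =
      (c : ℤ) ^ 3 - 6 * c ^ 2 + 14 * c - 13 := by
  rw [Fintype.card_congr
    (show {v : Fin 3 → Fin c // (v 0 ≠ v 1 ∧ v 1 ≠ v 2) ∧ (∀ i, v i ≠ u i) ∧ v 0 ≠ v 2} ≃
        {p : (Fin c × Fin c) × Fin c //
          (p.1.1 ≠ u 0 ∧ (p.1.2 ≠ u 1 ∧ p.1.2 ≠ p.1.1)) ∧
          (p.2 ≠ u 2 ∧ p.2 ≠ p.1.2 ∧ p.2 ≠ p.1.1)} from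
      { toFun := fun v => ⟨((v.1 0, v.1 1), v.1 2),
          ⟨v.2.2.1 0, v.2.2.1 1, Ne.symm v.2.1.1⟩,
          ⟨v.2.2.1 2, Ne.symm v.2.1.2, Ne.symm v.2.2.2⟩⟩
        invFun := fun p => ⟨![p.1.1.1, p.1.1.2, p.1.2],
          ⟨⟨Ne.symm p.2.1.2.2, Ne.symm p.2.2.2.1⟩,
            fun i => by
              fin_cases i
              · exact p.2.1.1
              · exact p.2.1.2.1
              · exact p.2.2.1,
            Ne.symm p.2.2.2.2⟩⟩
        left_inv := fun v => Subtype.ext (by funext i; fin_cases i <;> rfl)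
        right_inv := fun p => rfl })]
  exact LB_B (u 0) (u 1) (u 2) h01 h12 h02

lemma card_pairs : (Fintype.card {p : Fin c × Fin c // p.2 ≠ p.1} : ℤ) = (c : ℤ) * (c - 1) := by
  have h : Fintype.card {p : Fin c × Fin c // (fun _ : Fin c => True) p.1 ∧ p.2 ≠ p.1} =
      ∑ a ∈ Finset.univ.filter (fun _ : Fin c => True),
        Fintype.card {b : Fin c // b ≠ a} :=
    card_prod_split (fun _ => True) (fun a b => b ≠ a)
  have h2 : Fintype.card {p : Fin c × Fin c // p.2 ≠ p.1} =
      Fintype.card {p : Fin c × Fin c // (fun _ : Fin c => True) p.1 ∧ p.2 ≠ p.1} :=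
    Fintype.card_congr (Equiv.subtypeEquivRight (fun p => by simp))
  rw [h2, h]
  push_cast
  rw [Finset.sum_congr rfl (fun a _ =>
    show ((Fintype.card {b : Fin c // b ≠ a} : ℤ)) = (c : ℤ) - 1 by
      rw [Fintype.card_subtype, card_ne a, Nat.cast_sub (Fin.pos a)]
      simp)]
  rw [Finset.sum_const, nsmul_eq_mul]
  simp [mul_comm]
end ColCounts

lemma base_a (c : ℕ) : (aCount 0 c : ℤ) = (c : ℤ) * ((c : ℤ) - 1) := by
  have h : aCount 0 c = Fintype.card {p : Fin c × Fin c // p.2 ≠ p.1} :=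
    Fintype.card_congr
      { toFun := fun f => ⟨(f.1 (0, Fin.last 0), f.1 (1, Fin.last 0)),
          Ne.symm (f.2.1 _ _ (adj01 _))⟩
        invFun := fun p => ⟨fun q => ![p.1.1, p.1.2, p.1.1] q.1,
          ⟨by
            intro s t hadj
            rcases hadj with ⟨hrow, hcol⟩ | ⟨hcol, hrow⟩
            · exfalso
              have h1 := s.2.isLt
              have h2 := t.2.isLt
              omega
            · exact col_adj ![p.1.1, p.1.2, p.1.1] (Ne.symm p.2) p.2 s.1 t.1 hrow,
          rfl⟩⟩
        left_inv := fun f => Subtype.ext (by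
          funext q
          obtain ⟨i, t⟩ := q
          fin_cases i <;> fin_cases t
          · rfl
          · rfl
          · exact f.2.2)
        right_inv := fun p => rfl }
  rw [h, card_pairs]

lemma base_b (c : ℕ) : (bCount 0 c : ℤ) = (c : ℤ) * ((c : ℤ) - 1) * ((c : ℤ) - 2) := by
  have h2 : bCount 0 c = Fintype.card {p : (Fin c × Fin c) × Fin c //
      (fun a : Fin c × Fin c => a.2 ≠ a.1) p.1 ∧
      (fun (a : Fin c × Fin c) (b : Fin c) => b ≠ a.1 ∧ b ≠ a.2) p.1 p.2} :=
    Fintype.card_congr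
      { toFun := fun f => ⟨((f.1 (0, Fin.last 0), f.1 (1, Fin.last 0)), f.1 (2, Fin.last 0)),
          Ne.symm (f.2.1 _ _ (adj01 _)),
          Ne.symm f.2.2, Ne.symm (f.2.1 _ _ (adj12 _))⟩
        invFun := fun p => ⟨fun q => ![p.1.1.1, p.1.1.2, p.1.2] q.1,
          ⟨by
            intro s t hadj
            rcases hadj with ⟨hrow, hcol⟩ | ⟨hcol, hrow⟩
            · exfalso
              have h1 := s.2.isLt
              have h2 := t.2.isLt
              omega
            · exact col_adj ![p.1.1.1, p.1.1.2, p.1.2] (Ne.symm p.2.1)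
                (Ne.symm p.2.2.2) s.1 t.1 hrow,
          Ne.symm p.2.2.1⟩⟩
        left_inv := fun f => Subtype.ext (by
          funext q
          obtain ⟨i, t⟩ := q
          fin_cases i <;> fin_cases t <;> rfl)
        right_inv := fun p => rfl }
  have h := card_prod_split (fun a : Fin c × Fin c => a.2 ≠ a.1)
    (fun (a : Fin c × Fin c) (b : Fin c) => b ≠ a.1 ∧ b ≠ a.2)
  rw [h2, h]
  push_cast
  rw [Finset.sum_congr rfl (fun a ha =>
    show ((Fintype.card {b : Fin c // b ≠ a.1 ∧ b ≠ a.2} : ℤ)) = (c : ℤ) - 2 by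
      have hne : a.2 ≠ a.1 := by
        simp only [Finset.mem_filter, Finset.mem_univ, true_and] at ha
        exact ha
      rw [Fintype.card_subtype, cardD a.1 a.2 (Ne.symm hne),
        Nat.cast_sub (two_le a.2 a.1 hne)]
      push_cast
      ring)]
  rw [Finset.sum_const, nsmul_eq_mul,
    show ((Finset.univ.filter (fun a : Fin c × Fin c => a.2 ≠ a.1)).card : ℤ)
      = (c : ℤ) * ((c : ℤ) - 1) by rw [← Fintype.card_subtype]; exact card_pairs]


/-- The vector recurrence for the 3×n grid: for `n ≥ 1` (here `aCount (n-1) c`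
plays the role of `a(n)`), `a(n+1) = (c²-3c+3)a(n) + (c²-4c+5)b(n)`,
`b(n+1) = (c³-6c²+13c-10)a(n) + (c³-6c²+14c-13)b(n)`, the total number of
proper colorings is `a(n)+b(n)`, and `a(1)=c(c-1)`, `b(1)=c(c-1)(c-2)`. -/
theorem grid3_recurrence (c : ℕ) :
    (∀ n : ℕ,
      (aCount (n + 1) c : ℤ) =
        ((c : ℤ) ^ 2 - 3 * c + 3) * aCount n c +
        ((c : ℤ) ^ 2 - 4 * c + 5) * bCount n c ∧
      (bCount (n + 1) c : ℤ) =
        ((c : ℤ) ^ 3 - 6 * c ^ 2 + 13 * c - 10) * aCount n c +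
        ((c : ℤ) ^ 3 - 6 * c ^ 2 + 14 * c - 13) * bCount n c) ∧
    (∀ n : ℕ, gridColorings 3 (n + 1) c = aCount n c + bCount n c) ∧
    (aCount 0 c : ℤ) = (c : ℤ) * ((c : ℤ) - 1) ∧
    (bCount 0 c : ℤ) = (c : ℤ) * ((c : ℤ) - 1) * ((c : ℤ) - 2) := by
  have hAfilter : ∀ n : ℕ, aCount n c =
      ((Finset.univ.filter (fun g : Fin 3 × Fin (n + 1) → Fin c => Proper3 g)).filter
        (fun g => g (0, Fin.last n) = g (2, Fin.last n))).card := by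
    intro n
    unfold aCount
    rw [Fintype.card_subtype, Finset.filter_filter]
    congr 1
  have hBfilter : ∀ n : ℕ, bCount n c =
      ((Finset.univ.filter (fun g : Fin 3 × Fin (n + 1) → Fin c => Proper3 g)).filter
        (fun g => ¬ g (0, Fin.last n) = g (2, Fin.last n))).card := by
    intro n
    unfold bCount
    rw [Fintype.card_subtype, Finset.filter_filter]
    congr 1
  refine ⟨fun n => ⟨?_, ?_⟩, fun n => ?_, base_a c, base_b c⟩
  · -- a recurrence
    have h1 : aCount (n + 1) c = Fintype.card {f : Fin 3 × Fin (n + 2) → Fin c //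
        Proper3 f ∧ (fun v : Fin 3 → Fin c => v 0 = v 2) (fun i => f (i, Fin.last (n + 1)))} :=
      Fintype.card_congr (Equiv.subtypeEquivRight (fun f => Iff.rfl))
    rw [h1, step_count n c (fun v : Fin 3 → Fin c => v 0 = v 2), Nat.cast_sum]
    rw [Finset.sum_congr rfl (fun g hg =>
      show ((Fintype.card {v : Fin 3 → Fin c //
          (v 0 ≠ v 1 ∧ v 1 ≠ v 2) ∧ (∀ i, v i ≠ g (i, Fin.last n)) ∧
          (fun v : Fin 3 → Fin c => v 0 = v 2) v} : ℤ)) =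
        if g (0, Fin.last n) = g (2, Fin.last n) then ((c : ℤ) ^ 2 - 3 * c + 3)
        else ((c : ℤ) ^ 2 - 4 * c + 5) by
        simp only [Finset.mem_filter, Finset.mem_univ, true_and] at hg
        have h01 : g (0, Fin.last n) ≠ g (1, Fin.last n) := hg _ _ (adj01 _)
        have h12 : g (1, Fin.last n) ≠ g (2, Fin.last n) := hg _ _ (adj12 _)
        by_cases h : g (0, Fin.last n) = g (2, Fin.last n)
        · rw [if_pos h]
          exact col_a_eq (fun i => g (i, Fin.last n)) h01 h
        · rw [if_neg h]
          exact col_a_ne (fun i => g (i, Fin.last n)) h01 h12 h)]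
    rw [Finset.sum_ite, Finset.sum_const, Finset.sum_const, nsmul_eq_mul, nsmul_eq_mul,
      ← hAfilter n, ← hBfilter n]
    ring
  · -- b recurrence
    have h1 : bCount (n + 1) c = Fintype.card {f : Fin 3 × Fin (n + 2) → Fin c //
        Proper3 f ∧ (fun v : Fin 3 → Fin c => v 0 ≠ v 2) (fun i => f (i, Fin.last (n + 1)))} :=
      Fintype.card_congr (Equiv.subtypeEquivRight (fun f => Iff.rfl))
    rw [h1, step_count n c (fun v : Fin 3 → Fin c => v 0 ≠ v 2), Nat.cast_sum]
    rw [Finset.sum_congr rfl (fun g hg =>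
      show ((Fintype.card {v : Fin 3 → Fin c //
          (v 0 ≠ v 1 ∧ v 1 ≠ v 2) ∧ (∀ i, v i ≠ g (i, Fin.last n)) ∧
          (fun v : Fin 3 → Fin c => v 0 ≠ v 2) v} : ℤ)) =
        if g (0, Fin.last n) = g (2, Fin.last n) then ((c : ℤ) ^ 3 - 6 * c ^ 2 + 13 * c - 10)
        else ((c : ℤ) ^ 3 - 6 * c ^ 2 + 14 * c - 13) by
        simp only [Finset.mem_filter, Finset.mem_univ, true_and] at hg
        have h01 : g (0, Fin.last n) ≠ g (1, Fin.last n) := hg _ _ (adj01 _)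
        have h12 : g (1, Fin.last n) ≠ g (2, Fin.last n) := hg _ _ (adj12 _)
        by_cases h : g (0, Fin.last n) = g (2, Fin.last n)
        · rw [if_pos h]
          exact col_b_eq (fun i => g (i, Fin.last n)) h01 h12 h
        · rw [if_neg h]
          exact col_b_ne (fun i => g (i, Fin.last n)) h01 h12 h)]
    rw [Finset.sum_ite, Finset.sum_const, Finset.sum_const, nsmul_eq_mul, nsmul_eq_mul,
      ← hAfilter n, ← hBfilter n]
    ring
  · -- total
    have h1 : gridColorings 3 (n + 1) c =
        (Finset.univ.filter (fun g : Fin 3 × Fin (n + 1) → Fin c => Proper3 g)).card := by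
      unfold gridColorings
      rw [Fintype.card_subtype]
      congr 1
    rw [h1, hAfilter n, hBfilter n]
    exact (Finset.card_filter_add_card_filter_not
      (s := Finset.univ.filter (fun g : Fin 3 × Fin (n + 1) → Fin c => Proper3 g))
      (fun g => g (0, Fin.last n) = g (2, Fin.last n))).symm
end

section
/- For every graph G on m vertices and every fixed width-coupling bipartite graph C (a set of ordered pairs in {1,...,m}²), the number of proper c-colorings of the layered graph M_n(G,C) satisfies a linear recurrence in n with coefficients that are polynomials in c, of order at most the Bell number B_m. -/
/-- Number of proper `c`-colorings of the layered graph `M_n(G,C)`: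
`n` layers of `m` vertices, edges within each layer mimicking `G`, and an edge
from `(α,i)` to `(β,i+1)` for each `(α,β) ∈ C`. -/
def layeredColorings {m : ℕ} (G : SimpleGraph (Fin m)) [DecidableRel G.Adj]
    (C : Finset (Fin m × Fin m)) (n c : ℕ) : ℕ :=
  Fintype.card {f : Fin m × Fin n → Fin c //
    (∀ i : Fin n, ∀ α β, G.Adj α β → f (α, i) ≠ f (β, i)) ∧
    (∀ i : Fin n, ∀ h : (i : ℕ) + 1 < n, ∀ e ∈ C,
      f (e.1, i) ≠ f (e.2, ⟨(i : ℕ) + 1, h⟩))}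

/-- The `m`-th Bell number: the number of set partitions of an `m`-element set. -/
def bellNumber (m : ℕ) : ℕ :=
  Fintype.card (Finpartition (Finset.univ : Finset (Fin m)))

open Finset Polynomial

namespace LayeredAux

variable {m : ℕ}

abbrev Pm (m : ℕ) := Finpartition (Finset.univ : Finset (Fin m))

/-- The kernel partition of a function. -/
def kerPart {γ : Type*} [DecidableEq γ] (f : Fin m → γ) : Pm m :=
  Finpartition.ofSetoid ⟨fun a b => f a = f b,
    ⟨fun _ => rfl, fun h => h.symm, fun h h' => h.trans h'⟩⟩

lemma mem_part_kerPart {γ : Type*} [DecidableEq γ] (f : Fin m → γ) (a b : Fin m) :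
    b ∈ (kerPart f).part a ↔ f a = f b :=
  Finpartition.mem_part_ofSetoid_iff_rel

/-- canonical representative (least element of the part). -/
def rp (p : Pm m) (a : Fin m) : Fin m :=
  (p.part a).min' ⟨a, p.mem_part (mem_univ a)⟩

lemma rp_mem (p : Pm m) (a : Fin m) : rp p a ∈ p.part a := Finset.min'_mem _ _

lemma part_rp (p : Pm m) (a : Fin m) : p.part (rp p a) = p.part a :=
  p.part_eq_of_mem (p.part_mem.2 (mem_univ a)) (rp_mem p a)

lemma rp_congr {p : Pm m} {a b : Fin m} (h : p.part a = p.part b) : rp p a = rp p b := by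
  unfold rp; congr 1

lemma rp_eq_iff {p : Pm m} {a b : Fin m} : rp p a = rp p b ↔ b ∈ p.part a := by
  constructor
  · intro h
    rw [p.mem_part_iff_part_eq_part (mem_univ b) (mem_univ a)]
    rw [← part_rp p a, ← part_rp p b, h]
  · intro h
    exact (rp_congr ((p.mem_part_iff_part_eq_part (mem_univ b) (mem_univ a)).1 h)).symm

lemma rp_idem (p : Pm m) (a : Fin m) : rp p (rp p a) = rp p a :=
  rp_congr (part_rp p a)

lemma image_part (p : Pm m) : Finset.univ.image p.part = p.parts := by
  apply Finset.Subset.antisymm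
  · intro t ht
    obtain ⟨a, -, rfl⟩ := Finset.mem_image.1 ht
    exact p.part_mem.2 (mem_univ a)
  · intro t ht
    obtain ⟨a, ha⟩ := p.nonempty_of_mem_parts ht
    exact Finset.mem_image.2 ⟨a, mem_univ a, p.part_eq_of_mem ht ha⟩

lemma kerPart_eq_iff {γ : Type*} [DecidableEq γ] {f : Fin m → γ} {p : Pm m} :
    kerPart f = p ↔ ∀ a b, f a = f b ↔ rp p a = rp p b := by
  constructor
  · rintro rfl a b
    rw [rp_eq_iff, mem_part_kerPart]
  · intro h
    ext t
    rw [← image_part p]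
    show t ∈ (Finpartition.ofSetoid _).parts ↔ _
    rw [Finpartition.ofSetoid, Finpartition.ofSetSetoid]
    simp only [Finset.mem_image, mem_univ, true_and]
    apply exists_congr; intro a
    constructor
    · rintro rfl
      ext b
      simp only [Finset.mem_filter, mem_univ, true_and]
      show b ∈ p.part a ↔ f a = f b
      rw [h a b]; exact rp_eq_iff.symm
    · rintro rfl
      ext b
      simp only [Finset.mem_filter, mem_univ, true_and]
      show f a = f b ↔ b ∈ p.part a
      rw [h a b]; exact rp_eq_iff


section Transfer

variable (G : SimpleGraph (Fin m)) [DecidableRel G.Adj] (C : Finset (Fin m × Fin m))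

/-- Representatives of the parts of `p`. -/
def BB (p : Pm m) : Finset (Fin m) := Finset.univ.image (rp p)

lemma rp_mem_BB (p : Pm m) (a : Fin m) : rp p a ∈ BB p :=
  Finset.mem_image.2 ⟨a, mem_univ a, rfl⟩

lemma BB_fixed {p : Pm m} {b : Fin m} (hb : b ∈ BB p) : rp p b = b := by
  obtain ⟨a, -, rfl⟩ := Finset.mem_image.1 hb
  exact rp_idem p a

/-- `q` has no `G`-edge inside a part. -/
def ok (q : Pm m) : Prop := ∀ a b, G.Adj a b → rp q a ≠ rp q b

instance (q : Pm m) : Decidable (ok G q) := by unfold ok; infer_instance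

/-- Forbidden representatives (in `p`) for the part of `q` represented by `b`. -/
def DD (q p : Pm m) (b : Fin m) : Finset (Fin m) :=
  (Finset.univ.filter (fun α => ∃ β, (α, β) ∈ C ∧ rp q β = b)).image (rp p)

lemma DD_subset (q p : Pm m) (b : Fin m) : DD C q p b ⊆ BB p := by
  intro x hx
  obtain ⟨a, -, rfl⟩ := Finset.mem_image.1 hx
  exact rp_mem_BB p a

/-- Number of partial injections. -/
def II (q p : Pm m) (S : Finset (↥(BB q))) : ℕ :=
  Fintype.card {ψ : ↥S → Fin m //
    Function.Injective ψ ∧ ∀ b : ↥S, ψ b ∈ BB p ∧ ψ b ∉ DD C q p ↑↑b}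

/-- The transfer-matrix entry, a polynomial in the number of colors. -/
noncomputable def QQ (q p : Pm m) : Polynomial ℤ :=
  if ok G q then
    ∑ S : Finset (↥(BB q)), (II C q p S : Polynomial ℤ) *
      (descPochhammer ℤ ((BB q).card - S.card)).comp (X - Polynomial.C ((BB p).card : ℤ))
  else 0

lemma f_rp {γ : Type*} [DecidableEq γ] (f : Fin m → γ) (a : Fin m) :
    f (rp (kerPart f) a) = f a :=
  (kerPart_eq_iff.1 rfl _ _).2 (rp_idem _ _)

lemma injOn_BB {γ : Type*} [DecidableEq γ] (f : Fin m → γ) :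
    Set.InjOn f (BB (kerPart f)) := by
  intro x hx y hy hxy
  have := (kerPart_eq_iff.1 (rfl : kerPart f = kerPart f) x y).1 hxy
  rwa [BB_fixed hx, BB_fixed hy] at this

lemma image_BB {γ : Type*} [DecidableEq γ] (f : Fin m → γ) :
    (BB (kerPart f)).image f = Finset.univ.image f := by
  apply Finset.Subset.antisymm
  · intro y hy; obtain ⟨x, -, rfl⟩ := Finset.mem_image.1 hy
    exact Finset.mem_image.2 ⟨x, mem_univ x, rfl⟩
  · intro y hy; obtain ⟨x, -, rfl⟩ := Finset.mem_image.1 hy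
    exact Finset.mem_image.2 ⟨rp (kerPart f) x, rp_mem_BB _ x, f_rp f x⟩

lemma card_BB {γ : Type*} [DecidableEq γ] (f : Fin m → γ) :
    (BB (kerPart f)).card = (Finset.univ.image f).card := by
  rw [← image_BB f, Finset.card_image_of_injOn (injOn_BB f)]

theorem step1 (c : ℕ) (f : Fin m → Fin c) (q : Pm m) (hok : ok G q) :
    Fintype.card {g : Fin m → Fin c //
        (∀ a b, G.Adj a b → g a ≠ g b) ∧ (∀ e ∈ C, g e.2 ≠ f e.1) ∧ kerPart g = q}
      = Fintype.card {h : ↥(BB q) → Fin c //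
        Function.Injective h ∧ ∀ b : ↥(BB q), ∀ x ∈ DD C q (kerPart f) ↑b, h b ≠ f x} := by
  have hker : ∀ {g : Fin m → Fin c}, kerPart g = q → ∀ a b : Fin m, (g a = g b ↔ rp q a = rp q b) :=
    fun h => kerPart_eq_iff.1 h
  apply Fintype.card_congr
  refine ⟨fun x => ⟨fun b => x.1 ↑b, ?_, ?_⟩,
          fun y => ⟨fun a => y.1 ⟨rp q a, rp_mem_BB q a⟩, ?_, ?_, ?_⟩, ?_, ?_⟩
  · -- injectivity of restriction
    intro b1 b2 hb
    have := (hker x.2.2.2 ↑b1 ↑b2).1 hb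
    rw [BB_fixed b1.2, BB_fixed b2.2] at this
    exact Subtype.ext this
  · -- avoidance
    rintro b x' hx' hxb
    obtain ⟨α, hα, rfl⟩ := Finset.mem_image.1 hx'
    obtain ⟨-, β, hβC, hβ⟩ := Finset.mem_filter.1 hα
    have h1 : x.1 β = x.1 ↑b := (hker x.2.2.2 β ↑b).2 (by rw [BB_fixed b.2, hβ])
    exact x.2.2.1 (α, β) hβC (h1.trans (hxb.trans (f_rp f α)))
  · -- proper
    intro a b hadj heq
    exact hok a b hadj (congrArg Subtype.val (y.2.1 heq))
  · -- compat
    rintro e he heq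
    refine y.2.2 ⟨rp q e.2, rp_mem_BB q e.2⟩ (rp (kerPart f) e.1) ?_ ?_
    · exact Finset.mem_image.2 ⟨e.1, Finset.mem_filter.2 ⟨mem_univ _, e.2, he, rfl⟩, rfl⟩
    · rw [f_rp f e.1]; exact heq
  · -- kernel
    apply kerPart_eq_iff.2
    intro a b
    constructor
    · intro hy
      have := y.2.1 hy
      exact congrArg Subtype.val this
    · intro hy
      show y.1 ⟨rp q a, rp_mem_BB q a⟩ = y.1 ⟨rp q b, rp_mem_BB q b⟩
      exact congrArg y.1 (Subtype.ext hy)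
  · -- left inverse
    rintro ⟨g, h1, h2, h3⟩
    apply Subtype.ext
    funext a
    exact (hker h3 (rp q a) a).2 (rp_idem q a)
  · -- right inverse
    rintro ⟨h, hinj, hav⟩
    apply Subtype.ext
    funext b
    exact congrArg h (Subtype.ext (BB_fixed b.2))

set_option maxHeartbeats 2000000 in
theorem step2 (c : ℕ) (f : Fin m → Fin c) (q : Pm m) :
    Fintype.card {h : ↥(BB q) → Fin c //
        Function.Injective h ∧ ∀ b : ↥(BB q), ∀ x ∈ DD C q (kerPart f) ↑b, h b ≠ f x}
      = ∑ S : Finset (↥(BB q)), II C q (kerPart f) S *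
          (c - (BB (kerPart f)).card).descFactorial ((BB q).card - S.card) := by
  set p := kerPart f with hp
  set Rng : Finset (Fin c) := (BB p).image f with hR
  have hEU : ∀ y : Fin c, y ∈ Rng → ∃! z, z ∈ BB p ∧ f z = y := by
    intro y hy
    obtain ⟨z, hz, rfl⟩ := Finset.mem_image.1 hy
    exact ⟨z, ⟨hz, rfl⟩, fun z' hz' => injOn_BB f hz'.1 hz hz'.2⟩
  have hcard : Fintype.card {h : ↥(BB q) → Fin c //
        Function.Injective h ∧ ∀ b : ↥(BB q), ∀ x ∈ DD C q p ↑b, h b ≠ f x}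
      = ∑ S : Finset (↥(BB q)), Fintype.card {h : ↥(BB q) → Fin c //
          (Function.Injective h ∧ ∀ b : ↥(BB q), ∀ x ∈ DD C q p ↑b, h b ≠ f x) ∧
            Finset.univ.filter (fun b => h b ∈ Rng) = S} := by
    rw [← Fintype.card_sigma]
    apply Fintype.card_congr
    exact ((Equiv.sigmaCongrRight
      (fun S => (Equiv.subtypeSubtypeEquivSubtypeInter _ _).symm)).trans
      (Equiv.sigmaFiberEquiv
      (fun h : {h : ↥(BB q) → Fin c //
          Function.Injective h ∧ ∀ b : ↥(BB q), ∀ x ∈ DD C q p ↑b, h b ≠ f x} =>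
        Finset.univ.filter (fun b => h.1 b ∈ Rng)))).symm
  rw [hcard]
  apply Finset.sum_congr rfl
  intro S _
  have hfib : ∀ (h : ↥(BB q) → Fin c),
      (Finset.univ.filter (fun b => h b ∈ Rng) = S) ↔ (∀ b, h b ∈ Rng ↔ b ∈ S) := by
    intro h
    rw [Finset.ext_iff]
    apply forall_congr'
    intro b
    simp
  have key : Fintype.card {h : ↥(BB q) → Fin c //
          (Function.Injective h ∧ ∀ b : ↥(BB q), ∀ x ∈ DD C q p ↑b, h b ≠ f x) ∧
            Finset.univ.filter (fun b => h b ∈ Rng) = S}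
      = II C q p S * Fintype.card ({b : ↥(BB q) // b ∉ S} ↪ {y : Fin c // y ∉ Rng}) := by
    rw [II, ← Fintype.card_prod]
    apply Fintype.card_congr
    have hx : ∀ (h : ↥(BB q) → Fin c), Finset.univ.filter (fun b => h b ∈ Rng) = S →
        ∀ b : ↥S, h ↑b ∈ Rng := by
      intro h hh b
      exact ((hfib h).1 hh ↑b).2 b.2
    refine ⟨fun x => ⟨⟨fun b => Finset.choose (fun z => f z = x.1 ↑b) (BB p)
        (hEU _ (hx x.1 x.2.2 b)), ?_, ?_⟩,
        ⟨fun b => ⟨x.1 ↑b, fun hmem => b.2 (((hfib x.1).1 x.2.2 ↑b).1 hmem)⟩, ?_⟩⟩,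
      fun y => ⟨fun b => if hb : ↑b ∈ S then f (y.1.1 ⟨↑b, hb⟩) else ↑(y.2 ⟨b, hb⟩),
        ⟨?_, ?_⟩, ?_⟩, ?_, ?_⟩
    · -- ψ injective
      intro b1 b2 hb
      dsimp only at hb
      have h1 := Finset.choose_property (fun z => f z = x.1 ↑b1) (BB p) (hEU _ (hx x.1 x.2.2 b1))
      have h2 := Finset.choose_property (fun z => f z = x.1 ↑b2) (BB p) (hEU _ (hx x.1 x.2.2 b2))
      rw [hb] at h1
      have : x.1 ↑b1 = x.1 ↑b2 := h1.symm.trans h2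
      exact Subtype.ext (Subtype.ext (congrArg Subtype.val (x.2.1.1 this)))
    · -- ψ in BB p and not in DD
      intro b
      refine ⟨Finset.choose_mem _ _ _, fun hD => ?_⟩
      exact x.2.1.2 ↑b _ hD
        (Finset.choose_property (fun z => f z = x.1 ↑b) (BB p) (hEU _ (hx x.1 x.2.2 b))).symm
    · -- e injective
      intro b1 b2 hb
      dsimp only at hb
      have : x.1 ↑b1 = x.1 ↑b2 := congrArg Subtype.val hb
      exact Subtype.ext (x.2.1.1 this)
    · -- invFun: injective
      intro b1 b2 hb
      dsimp only at hb
      by_cases h1 : ↑b1 ∈ S <;> by_cases h2 : ↑b2 ∈ S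
      · rw [dif_pos h1, dif_pos h2] at hb
        have h3 := injOn_BB f (y.1.2.2 ⟨↑b1, h1⟩).1 (y.1.2.2 ⟨↑b2, h2⟩).1 hb
        exact congrArg Subtype.val (y.1.2.1 h3)
      · rw [dif_pos h1, dif_neg h2] at hb
        exact absurd (hb ▸ Finset.mem_image.2 ⟨_, (y.1.2.2 ⟨↑b1, h1⟩).1, rfl⟩)
          (y.2 ⟨b2, h2⟩).2
      · rw [dif_neg h1, dif_pos h2] at hb
        exact absurd (hb ▸ Finset.mem_image.2 ⟨_, (y.1.2.2 ⟨↑b2, h2⟩).1, rfl⟩)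
          (y.2 ⟨b1, h1⟩).2
      · rw [dif_neg h1, dif_neg h2] at hb
        have h3 := y.2.injective (Subtype.ext hb)
        exact congrArg Subtype.val h3
    · -- invFun: avoidance
      intro b x' hx' hbx
      dsimp only at hbx
      by_cases h1 : ↑b ∈ S
      · rw [dif_pos h1] at hbx
        have := injOn_BB f (y.1.2.2 ⟨↑b, h1⟩).1 (DD_subset C q p ↑b hx') hbx
        exact (y.1.2.2 ⟨↑b, h1⟩).2 (this ▸ hx')
      · rw [dif_neg h1] at hbx
        exact (y.2 ⟨b, h1⟩).2 (hbx ▸ Finset.mem_image.2 ⟨x', DD_subset C q p ↑b hx', rfl⟩)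
    · -- invFun: fiber
      rw [hfib]
      intro b
      by_cases h1 : b ∈ S
      · rw [dif_pos h1]
        simp only [iff_true, h1]
        exact Finset.mem_image.2 ⟨_, (y.1.2.2 ⟨↑b, h1⟩).1, rfl⟩
      · rw [dif_neg h1]
        simp only [iff_false, h1]
        exact (y.2 ⟨b, h1⟩).2
    · -- left inverse
      intro x
      apply Subtype.ext
      funext b
      dsimp only
      by_cases h1 : b ∈ S
      · rw [dif_pos h1]
        exact Finset.choose_property (fun z => f z = x.1 ↑(⟨b, h1⟩ : ↥S)) (BB p)
          (hEU _ (hx x.1 x.2.2 ⟨b, h1⟩))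
      · rw [dif_neg h1]
        rfl
    · -- right inverse
      intro y
      apply Prod.ext
      · apply Subtype.ext
        funext b
        dsimp only
        have hmem := (y.1.2.2 b).1
        generalize_proofs hpf
        exact injOn_BB f (Finset.choose_mem _ _ _) hmem
          (Eq.trans (Finset.choose_property (fun z => f z = if hb : (b : ↥(BB q)) ∈ S
            then f (y.1.1 ⟨(b : ↥(BB q)), hb⟩) else ((y.2 ⟨(b : ↥(BB q)), hb⟩ : {y : Fin c // y ∉ Rng}) : Fin c)) _ _) (dif_pos b.2))
      · apply DFunLike.ext
        intro b
        apply Subtype.ext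
        exact dif_neg b.2
  rw [key]
  congr 1
  rw [Fintype.card_embedding_eq]
  congr 1
  · rw [Fintype.card_subtype_compl, Fintype.card_coe, Fintype.card_fin]
    congr 1
    rw [hR, Finset.card_image_of_injOn (injOn_BB f)]
  · rw [Fintype.card_subtype_compl, Fintype.card_coe, Fintype.card_coe]

theorem core (c : ℕ) (f : Fin m → Fin c) (q : Pm m) :
    (Fintype.card {g : Fin m → Fin c //
        (∀ a b, G.Adj a b → g a ≠ g b) ∧ (∀ e ∈ C, g e.2 ≠ f e.1) ∧ kerPart g = q} : ℤ)
      = (QQ G C q (kerPart f)).eval (c : ℤ) := by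
  by_cases hok : ok G q
  · rw [step1 G C c f q hok, step2 C c f q, QQ, if_pos hok]
    have hd : (BB (kerPart f)).card ≤ c := by
      have h1 : (BB (kerPart f)).card = (Finset.univ.image f).card := card_BB f
      calc (BB (kerPart f)).card = (Finset.univ.image f).card := h1
        _ ≤ (Finset.univ : Finset (Fin c)).card := card_le_card (subset_univ _)
        _ = c := by simp
    push_cast
    rw [eval_finset_sum]
    apply Finset.sum_congr rfl
    intro S _
    rw [eval_mul, eval_comp]
    congr 1
    · simp
    · rw [eval_sub, eval_X, eval_C]
      rw [show ((c : ℤ) - ((BB (kerPart f)).card : ℤ)) = (((c - (BB (kerPart f)).card : ℕ)) : ℤ) by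
        push_cast [hd]; ring]
      rw [descPochhammer_eval_eq_descFactorial]
  · simp only [QQ, if_neg hok, eval_zero]
    norm_cast
    rw [Fintype.card_eq_zero_iff]
    rw [ok] at hok
    push_neg at hok
    obtain ⟨a, b, hadj, hab⟩ := hok
    exact ⟨fun ⟨g, h1, _, h3⟩ => h1 a b hadj ((kerPart_eq_iff.1 h3 a b).2 hab)⟩

end Transfer

section Outer

variable (G : SimpleGraph (Fin m)) [DecidableRel G.Adj] (C : Finset (Fin m × Fin m))

abbrev ColT (n c : ℕ) := {f : Fin m × Fin n → Fin c //
    (∀ i : Fin n, ∀ α β, G.Adj α β → f (α, i) ≠ f (β, i)) ∧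
    (∀ i : Fin n, ∀ h : (i : ℕ) + 1 < n, ∀ e ∈ C,
      f (e.1, i) ≠ f (e.2, ⟨(i : ℕ) + 1, h⟩))}

/-- kernel partition of the top layer. -/
def kappa {n c : ℕ} (u : ColT G C (n+1) c) : Pm m :=
  kerPart (fun a => u.1 (a, Fin.last n))

/-- the state vector: number of colorings of `M_{n+1}` with given top-layer kernel. -/
def VV (c n : ℕ) (q : Pm m) : ℕ :=
  Fintype.card {u : ColT G C (n+1) c // kappa G C u = q}

lemma layered_eq (n c : ℕ) : layeredColorings G C n c = Fintype.card (ColT G C n c) := rfl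

lemma sum_VV (c n : ℕ) : layeredColorings G C (n+1) c = ∑ q : Pm m, VV G C c n q := by
  rw [layered_eq]
  simp only [VV]
  rw [← Fintype.card_sigma]
  exact Fintype.card_congr (Equiv.sigmaFiberEquiv (kappa G C)).symm

/-- restriction to the first `n+1` layers. -/
def restr {n c : ℕ} (u : ColT G C (n+2) c) : ColT G C (n+1) c := by
  refine ⟨fun z => u.1 (z.1, z.2.castSucc), fun i α β hadj => u.2.1 i.castSucc α β hadj,
    fun i h e he => ?_⟩
  have h2 : ((Fin.castSucc i : Fin (n+2)) : ℕ) + 1 < n + 2 := by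
    simp only [Fin.coe_castSucc]; omega
  have := u.2.2 i.castSucc h2 e he
  have hco : (⟨(i : ℕ) + 1, h⟩ : Fin (n+1)).castSucc
      = (⟨((Fin.castSucc i : Fin (n+2)) : ℕ) + 1, h2⟩ : Fin (n+2)) := by
    apply Fin.ext; simp
  dsimp only
  rw [hco]
  exact this

def fiber_equiv (c n : ℕ) (q : Pm m) (v : ColT G C (n+1) c) :
    {x : {u : ColT G C (n+2) c // kappa G C u = q} // restr G C x.1 = v}
      ≃ {g : Fin m → Fin c //
          (∀ a b, G.Adj a b → g a ≠ g b) ∧ (∀ e ∈ C, g e.2 ≠ v.1 (e.1, Fin.last n)) ∧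
          kerPart g = q} := by
  refine ⟨fun x => ⟨fun a => x.1.1.1 (a, Fin.last (n+1)), ?_, ?_, ?_⟩,
          fun y => ⟨⟨⟨fun z => if h : (z.2 : ℕ) < n + 1 then v.1 (z.1, ⟨z.2, h⟩) else y.1 z.1,
            ?_, ?_⟩, ?_⟩, ?_⟩, ?_, ?_⟩
  · -- proper
    exact fun a b hadj => x.1.1.2.1 (Fin.last (n+1)) a b hadj
  · -- compat
    intro e he heq
    have hv := congrFun (congrArg Subtype.val x.2) (e.1, Fin.last n)
    have h2 : ((Fin.castSucc (Fin.last n) : Fin (n+2)) : ℕ) + 1 < n + 2 := by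
      simp only [Fin.coe_castSucc, Fin.val_last]; omega
    have h3 := x.1.1.2.2 (Fin.castSucc (Fin.last n)) h2 e he
    have h4 : (⟨((Fin.castSucc (Fin.last n) : Fin (n+2)) : ℕ) + 1, h2⟩ : Fin (n+2))
        = Fin.last (n+1) := by
      apply Fin.ext; simp
    rw [h4] at h3
    have hv2 : x.1.1.1 (e.1, Fin.castSucc (Fin.last n)) = v.1 (e.1, Fin.last n) := hv
    exact h3 (hv2.trans heq.symm)
  · -- kernel
    exact x.1.2
  · -- invFun cond1
    intro i a b hadj
    dsimp only
    by_cases h : (i : ℕ) < n + 1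
    · rw [dif_pos h, dif_pos h]
      exact v.2.1 ⟨i, h⟩ a b hadj
    · rw [dif_neg h, dif_neg h]
      exact y.2.1 a b hadj
  · -- invFun cond2
    intro i hlt e he
    dsimp only
    have hi : (i : ℕ) < n + 1 := by omega
    rw [dif_pos hi]
    by_cases h2 : (i : ℕ) + 1 < n + 1
    · rw [dif_pos h2]
      exact v.2.2 ⟨i, hi⟩ h2 e he
    · rw [dif_neg h2]
      have hieq : (⟨(i : ℕ), hi⟩ : Fin (n+1)) = Fin.last n := by
        apply Fin.ext; simp only [Fin.val_last]; omega
      rw [hieq]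
      exact (y.2.2.1 e he).symm
  · -- invFun kernel
    show kerPart _ = q
    rw [show (fun a => if h : ((Fin.last (n+1) : Fin (n+2)) : ℕ) < n + 1
        then v.1 (a, ⟨(Fin.last (n+1) : Fin (n+2)), h⟩) else y.1 a) = y.1 from
      funext fun a => dif_neg (by simp)]
    exact y.2.2.2
  · -- invFun restr
    apply Subtype.ext
    funext z
    show (if h : ((Fin.castSucc z.2 : Fin (n+2)) : ℕ) < n + 1
        then v.1 (z.1, ⟨(Fin.castSucc z.2 : Fin (n+2)), h⟩) else y.1 z.1) = v.1 z
    have h : ((Fin.castSucc z.2 : Fin (n+2)) : ℕ) < n + 1 := by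
      simp only [Fin.coe_castSucc]; exact z.2.isLt
    rw [dif_pos h]
    have : (⟨((Fin.castSucc z.2 : Fin (n+2)) : ℕ), h⟩ : Fin (n+1)) = z.2 := by
      apply Fin.ext; simp
    rw [this]
  · -- left inverse
    intro x
    apply Subtype.ext
    apply Subtype.ext
    apply Subtype.ext
    funext z
    dsimp only
    by_cases h : (z.2 : ℕ) < n + 1
    · rw [dif_pos h]
      have hv := congrFun (congrArg Subtype.val x.2) (z.1, ⟨(z.2 : ℕ), h⟩)
      have hv2 : x.1.1.1 (z.1, Fin.castSucc ⟨(z.2 : ℕ), h⟩) = v.1 (z.1, ⟨(z.2 : ℕ), h⟩) := hv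
      have hz : Fin.castSucc (⟨(z.2 : ℕ), h⟩ : Fin (n+1)) = z.2 := Fin.ext (by simp)
      rw [← hv2, hz]
    · rw [dif_neg h]
      have hz : Fin.last (n+1) = z.2 := by
        apply Fin.ext; simp only [Fin.val_last]; omega
      rw [hz]
  · -- right inverse
    intro y
    apply Subtype.ext
    funext a
    dsimp only
    exact dif_neg (by simp)

set_option maxHeartbeats 2000000 in
lemma VV_step (c n : ℕ) (q : Pm m) :
    (VV G C c (n+1) q : ℤ) = ∑ p : Pm m, (QQ G C q p).eval (c : ℤ) * VV G C c n p := by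
  have h1 : VV G C c (n+1) q
      = ∑ v : ColT G C (n+1) c, Fintype.card {g : Fin m → Fin c //
          (∀ a b, G.Adj a b → g a ≠ g b) ∧ (∀ e ∈ C, g e.2 ≠ v.1 (e.1, Fin.last n)) ∧
          kerPart g = q} := by
    rw [VV, ← Fintype.card_sigma]
    refine Fintype.card_congr ?_
    refine Equiv.trans (Equiv.sigmaFiberEquiv (fun x : {u : ColT G C (n+2) c //
      kappa G C u = q} => restr G C x.1)).symm ?_
    exact Equiv.sigmaCongrRight (fun v => fiber_equiv G C c n q v)
  rw [h1]
  push_cast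
  rw [show ∑ v : ColT G C (n+1) c, (Fintype.card {g : Fin m → Fin c //
      (∀ a b, G.Adj a b → g a ≠ g b) ∧ (∀ e ∈ C, g e.2 ≠ v.1 (e.1, Fin.last n)) ∧
      kerPart g = q} : ℤ)
    = ∑ v : ColT G C (n+1) c, (QQ G C q (kappa G C v)).eval (c : ℤ) from
    Finset.sum_congr rfl fun v _ => core G C c (fun a => v.1 (a, Fin.last n)) q]
  rw [← Fintype.sum_fiberwise (kappa G C) (fun v => (QQ G C q (kappa G C v)).eval (c : ℤ))]
  apply Finset.sum_congr rfl
  intro p _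
  trans (∑ _i : {v : ColT G C (n+1) c // kappa G C v = p}, (QQ G C q p).eval (c : ℤ))
  · exact Finset.sum_congr rfl fun i _ => congrArg (fun r => (QQ G C q r).eval (c : ℤ)) i.2
  · rw [Finset.sum_const, nsmul_eq_mul, mul_comm]
    rfl

end Outer

instance : Nonempty (Pm m) := ⟨⊥⟩

end LayeredAux

open LayeredAux in
set_option maxHeartbeats 1000000 in
/-- For every graph `G` on `m` vertices and coupling graph `C`, the sequence
`n ↦ P(M_n(G,C), c)` satisfies a linear recurrence (for `n ≥ 1`) of order at
most the Bell number `B_m`, with coefficients that are polynomials in `c`,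
uniformly in `c`. -/
theorem layered_colorings_linear_recurrence {m : ℕ} (G : SimpleGraph (Fin m))
    [DecidableRel G.Adj] (C : Finset (Fin m × Fin m)) :
    ∃ k : ℕ, 1 ≤ k ∧ k ≤ bellNumber m ∧ ∃ a : Fin k → Polynomial ℤ,
      ∀ c : ℕ, ∀ n : ℕ, 1 ≤ n →
        (layeredColorings G C (n + k) c : ℤ) =
          ∑ j : Fin k, (a j).eval (c : ℤ) * layeredColorings G C (n + j) c := by
  set k := Fintype.card (Pm m) with hk
  set M : Matrix (Pm m) (Pm m) (Polynomial ℤ) := (fun q p => QQ G C q p) with hM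
  have hdeg : M.charpoly.natDegree = k := Matrix.charpoly_natDegree_eq_dim M
  refine ⟨k, Fintype.card_pos, le_of_eq rfl, fun j => -(M.charpoly.coeff j), ?_⟩
  intro c n hn
  obtain ⟨n', rfl⟩ : ∃ n', n = n' + 1 := ⟨n - 1, (Nat.succ_pred_eq_of_pos hn).symm⟩
  set φ : Polynomial ℤ →+* ℤ := Polynomial.evalRingHom (c : ℤ) with hφ
  set Mc : Matrix (Pm m) (Pm m) ℤ := M.map φ with hMc
  set w : Pm m → ℤ := fun p => (VV G C c n' p : ℤ) with hw
  have hiter : ∀ i : ℕ, (fun q => (VV G C c (n' + i) q : ℤ)) = (Mc ^ i).mulVec w := by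
    intro i
    induction i with
    | zero => funext q; simp [Matrix.one_mulVec, hw]
    | succ i ih =>
      funext q
      calc ((VV G C c (n' + (i+1)) q : ℤ))
          = ∑ p : Pm m, (QQ G C q p).eval (c : ℤ) * VV G C c (n'+i) p := by
            rw [show n' + (i+1) = (n'+i) + 1 by ring]
            exact VV_step G C c (n' + i) q
        _ = (Mc.mulVec (fun p => (VV G C c (n'+i) p : ℤ))) q := by
            simp [Matrix.mulVec, dotProduct, hMc, hM, Matrix.map_apply, hφ]
            rfl
        _ = (Mc.mulVec ((Mc ^ i).mulVec w)) q := by rw [ih]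
        _ = ((Mc ^ (i+1)).mulVec w) q := by rw [Matrix.mulVec_mulVec, ← pow_succ']
  have hL : ∀ i : ℕ, (layeredColorings G C (n' + 1 + i) c : ℤ) = ∑ q, ((Mc ^ i).mulVec w) q := by
    intro i
    rw [show n' + 1 + i = (n' + i) + 1 by ring, sum_VV]
    push_cast
    exact Finset.sum_congr rfl fun q _ => congrFun (hiter i) q
  have hCH := Matrix.aeval_self_charpoly M
  rw [Polynomial.aeval_eq_sum_range, hdeg] at hCH
  have hpow : ∀ i : ℕ, (M ^ i).map φ = Mc ^ i := fun i => map_pow (RingHom.mapMatrix φ) M i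
  have hsm : ∀ (r : Polynomial ℤ) (N : Matrix (Pm m) (Pm m) (Polynomial ℤ)),
      (r • N).map φ = φ r • N.map φ := by
    intro r N; ext q p; simp [Matrix.map_apply]
  have h0 : ∑ i ∈ Finset.range (k + 1), φ (M.charpoly.coeff i) • Mc ^ i = 0 := by
    calc ∑ i ∈ Finset.range (k+1), φ (M.charpoly.coeff i) • Mc ^ i
        = ∑ i ∈ Finset.range (k+1), ((M.charpoly.coeff i • M ^ i).map φ) := by
          refine Finset.sum_congr rfl fun i _ => ?_
          rw [hsm, hpow]
      _ = (∑ i ∈ Finset.range (k+1), M.charpoly.coeff i • M ^ i).map φ :=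
          (map_sum (RingHom.mapMatrix φ) _ _).symm
      _ = (0 : Matrix (Pm m) (Pm m) (Polynomial ℤ)).map φ := by rw [hCH]
      _ = 0 := by ext q p; simp [Matrix.map_apply]
  have hsum : ∑ i ∈ Finset.range (k+1),
      φ (M.charpoly.coeff i) * (layeredColorings G C (n'+1+i) c : ℤ) = 0 := by
    calc ∑ i ∈ Finset.range (k+1), φ (M.charpoly.coeff i) * (layeredColorings G C (n'+1+i) c : ℤ)
        = ∑ i ∈ Finset.range (k+1), ∑ q, φ (M.charpoly.coeff i) * ((Mc ^ i).mulVec w) q := by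
          refine Finset.sum_congr rfl fun i _ => ?_
          rw [hL i, Finset.mul_sum]
      _ = ∑ q, ∑ i ∈ Finset.range (k+1), φ (M.charpoly.coeff i) * ((Mc ^ i).mulVec w) q :=
          Finset.sum_comm
      _ = ∑ q, ((∑ i ∈ Finset.range (k+1), φ (M.charpoly.coeff i) • Mc ^ i).mulVec w) q := by
          refine Finset.sum_congr rfl fun q _ => ?_
          simp only [Matrix.mulVec, dotProduct, Matrix.sum_apply, Matrix.smul_apply,
            smul_eq_mul, Finset.sum_mul, Finset.mul_sum]
          rw [Finset.sum_comm]
          exact Finset.sum_congr rfl fun p _ => Finset.sum_congr rfl fun i _ => by ring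
      _ = 0 := by rw [h0]; simp
  rw [Finset.sum_range_succ] at hsum
  have hco : M.charpoly.coeff k = 1 := by
    have hmon := Matrix.charpoly_monic M
    rw [Polynomial.Monic, Polynomial.leadingCoeff, hdeg] at hmon
    exact hmon
  rw [hco, map_one, one_mul] at hsum
  have hfin : (layeredColorings G C (n'+1+k) c : ℤ)
      = -∑ i ∈ Finset.range k, φ (M.charpoly.coeff i) * (layeredColorings G C (n'+1+i) c : ℤ) := by
    linarith [hsum]
  rw [hfin, ← Finset.sum_neg_distrib]
  rw [← Fin.sum_univ_eq_sum_range (fun i =>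
    -(φ (M.charpoly.coeff i) * (layeredColorings G C (n'+1+i) c : ℤ))) k]
  refine Finset.sum_congr rfl fun j _ => ?_
  simp [hφ]
end
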